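/- Let S be a siphon of a net whose maximal contained trap is Q ⊊ S. Then there exist k ≤ |S \ Q|, transitions t₁,…,t_k ∈ post(S), and a strictly decreasing chain S = R₁ ⊋ R₂ ⊋ ⋯ ⊋ R_k ⊋ Q with R_i = S \ pre({t₁,…,t_{i−1}}), such that for each i: pre(t_i) ∩ R_i ≠ ∅, post(t_i) ∩ R_i = ∅, pre(t_i) ∩ Q = ∅, and S \ pre({t₁,…,t_k}) = Q. -/
import Mathlib


open Classical

/-- A net: flow from places to transitions (`Fpt`) and transitions to places (`Ftp`). -/
structure Net (P T : Type) where
  Fpt : P → T → Prop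
  Ftp : T → P → Prop

namespace Net

variable {P T : Type}

/-- Input places of a transition. -/
def preT (N : Net P T) (t : T) : Set P := {p | N.Fpt p t}
/-- Output places of a transition. -/
def postT (N : Net P T) (t : T) : Set P := {p | N.Ftp t p}
/-- Transitions producing into a set of places. -/
def preS (N : Net P T) (S : Set P) : Set T := {t | ∃ p ∈ S, N.Ftp t p}
/-- Transitions consuming from a set of places. -/
def postS (N : Net P T) (S : Set P) : Set T := {t | ∃ p ∈ S, N.Fpt p t}
/-- A trap: every transition consuming from `Q` produces into `Q`. -/
def isTrap (N : Net P T) (Q : Set P) : Prop := N.postS Q ⊆ N.preS Q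
/-- A siphon: every transition producing into `S` consumes from `S`. -/
def isSiphon (N : Net P T) (S : Set P) : Prop := N.preS S ⊆ N.postS S
/-- The maximal trap contained in `S`: union of all traps inside `S`. -/
def maxTrap (N : Net P T) (S : Set P) : Set P := ⋃₀ {Q | N.isTrap Q ∧ Q ⊆ S}
/-- Free choice: input-sharing transitions have equal presets. -/
def freeChoice (N : Net P T) : Prop :=
  ∀ t t' : T, (N.preT t ∩ N.preT t').Nonempty → N.preT t = N.preT t'
/-- `t` is enabled at marking `M`. -/
def enabled (N : Net P T) (t : T) (M : P → ℕ) : Prop := ∀ p ∈ N.preT t, 1 ≤ M p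
/-- Firing `t` at `M` yields `M'`. -/
def fires (N : Net P T) (t : T) (M M' : P → ℕ) : Prop :=
  N.enabled t M ∧
    ∀ p, M' p = M p - (if p ∈ N.preT t then 1 else 0) + (if p ∈ N.postT t then 1 else 0)
/-- Reachability: reflexive-transitive closure of single firings. -/
def reach (N : Net P T) : (P → ℕ) → (P → ℕ) → Prop :=
  Relation.ReflTransGen (fun M M' => ∃ t, N.fires t M M')
/-- Firing a whole sequence of transitions. -/
def firesList (N : Net P T) : List T → (P → ℕ) → (P → ℕ) → Prop
  | [], M, M' => M' = M
  | t :: σ, M, M' => ∃ M₁, N.fires t M M₁ ∧ N.firesList σ M₁ M'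
/-- `t` is dead at `M`: no reachable marking enables it. -/
def dead (N : Net P T) (t : T) (M : P → ℕ) : Prop :=
  ∀ M', N.reach M M' → ¬ N.enabled t M'
/-- `t` is live at `M`: it is dead at no reachable marking. -/
def live (N : Net P T) (t : T) (M : P → ℕ) : Prop :=
  ∀ M', N.reach M M' → ¬ N.dead t M'

end Net

namespace PriorityAux
variable {P T : Type}

lemma maxTrap_isTrap (N : Net P T) (S : Set P) : N.isTrap (N.maxTrap S) := by
  intro t ht
  obtain ⟨p, hp, hpt⟩ := ht
  obtain ⟨Q, ⟨hQtrap, _⟩, hpQ⟩ := hp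
  obtain ⟨q, hq, hqt⟩ := hQtrap ⟨p, hpQ, hpt⟩
  exact ⟨q, ⟨Q, ⟨hQtrap, ‹Q ⊆ S›⟩, hq⟩, hqt⟩

lemma maxTrap_subset (N : Net P T) (S : Set P) : N.maxTrap S ⊆ S := by
  rintro p ⟨Q, ⟨_, hQS⟩, hpQ⟩; exact hQS hpQ

/-- step lemma -/
lemma step (N : Net P T) (S R : Set P) (hRS : R ⊆ S) (hQR : N.maxTrap S ⊂ R) :
    ∃ t, t ∈ N.postS S ∧ (N.preT t ∩ R).Nonempty ∧ N.postT t ∩ R = ∅ ∧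
      N.preT t ∩ N.maxTrap S = ∅ := by
  have hnt : ¬ N.isTrap R := by
    intro h
    exact hQR.2 (Set.subset_sUnion_of_mem ⟨h, hRS⟩)
  rw [Net.isTrap, Set.not_subset] at hnt
  obtain ⟨t, htpost, htpre⟩ := hnt
  obtain ⟨p, hpR, hpt⟩ := htpost
  refine ⟨t, ⟨p, hRS hpR, hpt⟩, ⟨p, hpt, hpR⟩, ?_, ?_⟩
  · ext q; simp only [Set.mem_inter_iff, Set.mem_empty_iff_false, iff_false, not_and]
    intro hq hqR
    exact htpre ⟨q, hqR, hq⟩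
  · ext q; simp only [Set.mem_inter_iff, Set.mem_empty_iff_false, iff_false, not_and]
    intro hq hqQ
    obtain ⟨r, hrQ, hrt⟩ := maxTrap_isTrap N S ⟨q, hqQ, hq⟩
    exact htpre ⟨r, hQR.1 hrQ, hrt⟩

def preSet (N : Net P T) (L : List T) : Set P := {p | ∃ t ∈ L, p ∈ N.preT t}

lemma preSet_nil (N : Net P T) : preSet N ([] : List T) = ∅ := by
  ext p; simp [preSet]

lemma preSet_cons (N : Net P T) (t : T) (L : List T) :
    preSet N (t :: L) = N.preT t ∪ preSet N L := by
  ext p; simp [preSet, or_and_right, exists_or]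

lemma mem_preSet_take (N : Net P T) (L : List T) (i : ℕ) (p : P) :
    p ∈ preSet N (L.take i) ↔ ∃ j : ℕ, ∃ h : j < L.length, j < i ∧ p ∈ N.preT L[j] := by
  constructor
  · rintro ⟨t, ht, hp⟩
    obtain ⟨j, hj, hget⟩ := List.getElem_of_mem ht
    have hjb : j < min i L.length := by simpa [List.length_take] using hj
    refine ⟨j, lt_of_lt_of_le hjb (min_le_right _ _),
      lt_of_lt_of_le hjb (min_le_left _ _), ?_⟩
    rw [List.getElem_take] at hget
    exact hget ▸ hp
  · rintro ⟨j, hjlen, hji, hp⟩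
    have hjb : j < (L.take i).length := by simp [List.length_take]; omega
    refine ⟨(L.take i)[j], List.getElem_mem hjb, ?_⟩
    rw [List.getElem_take]
    exact hp

lemma build [Fintype P] (N : Net P T) (S : Set P) :
    ∀ n (R : Set P), N.maxTrap S ⊆ R → R ⊆ S → (R \ N.maxTrap S).ncard ≤ n →
    ∃ L : List T,
      L.length ≤ (R \ N.maxTrap S).ncard ∧
      (∀ t ∈ L, t ∈ N.postS S) ∧
      (∀ i (h : i < L.length),
        (N.preT L[i] ∩ (R \ preSet N (L.take i))).Nonempty) ∧
      (∀ i (h : i < L.length),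
        N.postT L[i] ∩ (R \ preSet N (L.take i)) = ∅) ∧
      (∀ t ∈ L, N.preT t ∩ N.maxTrap S = ∅) ∧
      R \ preSet N L = N.maxTrap S := by
  intro n
  induction n with
  | zero =>
    intro R hQR hRS hcard
    have hfin : (R \ N.maxTrap S).Finite := Set.toFinite _
    have : R \ N.maxTrap S = ∅ := by
      rwa [Nat.le_zero, Set.ncard_eq_zero hfin] at hcard
    have hRQ : R = N.maxTrap S := by
      apply Set.Subset.antisymm _ hQR
      intro p hp
      by_contra h
      exact (Set.eq_empty_iff_forall_notMem.1 this p) ⟨hp, h⟩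
    exact ⟨[], by simp, by simp, by simp, by simp, by simp,
      by simp [preSet_nil, hRQ]⟩
  | succ n ih =>
    intro R hQR hRS hcard
    by_cases hRQ : R = N.maxTrap S
    · exact ⟨[], by simp, by simp, by simp, by simp, by simp,
        by simp [preSet_nil, hRQ]⟩
    · have hQRs : N.maxTrap S ⊂ R := hQR.lt_of_ne (Ne.symm hRQ)
      obtain ⟨t, htS, hpre, hpost, hpreQ⟩ := step N S R hRS hQRs
      set R' := R \ N.preT t with hR'
      obtain ⟨p, hpt, hpR⟩ := hpre
      have hpQ : p ∉ N.maxTrap S := fun h =>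
        (Set.eq_empty_iff_forall_notMem.1 hpreQ p) ⟨hpt, h⟩
      have hQR' : N.maxTrap S ⊆ R' := by
        intro q hq
        exact ⟨hQR hq, fun hc => (Set.eq_empty_iff_forall_notMem.1 hpreQ q) ⟨hc, hq⟩⟩
      have hR'S : R' ⊆ S := fun q hq => hRS hq.1
      have hssub : R' \ N.maxTrap S ⊂ R \ N.maxTrap S := by
        constructor
        · intro q hq; exact ⟨hq.1.1, hq.2⟩
        · intro hsub
          have := hsub ⟨hpR, hpQ⟩
          exact this.1.2 hpt
      have hlt : (R' \ N.maxTrap S).ncard < (R \ N.maxTrap S).ncard :=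
        Set.ncard_lt_ncard hssub (Set.toFinite _)
      have hcard' : (R' \ N.maxTrap S).ncard ≤ n := by omega
      obtain ⟨L, hlen, hmem, hne, hpo, hpq, hfin⟩ := ih R' hQR' hR'S hcard'
      refine ⟨t :: L, by simpa using by omega, ?_, ?_, ?_, ?_, ?_⟩
      · intro u hu
        rcases List.mem_cons.1 hu with h | h
        · exact h ▸ htS
        · exact hmem u h
      · intro i hi
        match i with
        | 0 => simpa [preSet_nil] using ⟨p, hpt, hpR⟩
        | (j+1) =>
          have hj : j < L.length := by simpa using hi
          have := hne j hj
          simpa [hR', List.take_succ_cons, preSet_cons, Set.diff_diff] using this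
      · intro i hi
        match i with
        | 0 => simpa [preSet_nil] using hpost
        | (j+1) =>
          have hj : j < L.length := by simpa using hi
          have := hpo j hj
          simpa [hR', List.take_succ_cons, preSet_cons, Set.diff_diff] using this
      · intro u hu
        rcases List.mem_cons.1 hu with h | h
        · exact h ▸ hpreQ
        · exact hpq u h
      · rw [preSet_cons, ← Set.diff_diff]; exact hfin

end PriorityAux

/-- the priority-transition chain construction for a siphon whose
maximal trap is proper. -/
theorem priority_chain {P T : Type} [Fintype P] (N : Net P T) (S : Set P)
    (hS : N.isSiphon S) (hQ : N.maxTrap S ⊂ S) :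
    ∃ (k : ℕ) (t : Fin k → T) (R : Fin k → Set P),
      k ≤ (S \ N.maxTrap S).ncard ∧
      (∀ i, t i ∈ N.postS S) ∧
      (∀ i, R i = S \ {p | ∃ j, j < i ∧ p ∈ N.preT (t j)}) ∧
      (∀ i j : Fin k, i < j → R j ⊂ R i) ∧
      (∀ h0 : 0 < k, R ⟨0, h0⟩ = S) ∧
      (∀ i, N.maxTrap S ⊂ R i) ∧
      (∀ i, (N.preT (t i) ∩ R i).Nonempty) ∧
      (∀ i, N.postT (t i) ∩ R i = ∅) ∧
      (∀ i, N.preT (t i) ∩ N.maxTrap S = ∅) ∧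
      S \ {p | ∃ i, p ∈ N.preT (t i)} = N.maxTrap S := by
  obtain ⟨L, hlen, hmem, hne, hpo, hpq, hfin⟩ :=
    PriorityAux.build N S ((S \ N.maxTrap S).ncard) S hQ.1 le_rfl le_rfl
  set R : Fin L.length → Set P :=
    fun i => S \ {p | ∃ j : Fin L.length, j < i ∧ p ∈ N.preT L[j]} with hRdef
  have hR : ∀ i : Fin L.length, R i = S \ PriorityAux.preSet N (L.take i) := by
    intro i
    ext p
    simp only [hRdef, Set.mem_diff, Set.mem_setOf_eq, PriorityAux.mem_preSet_take]
    constructor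
    · rintro ⟨hpS, hnp⟩
      exact ⟨hpS, fun ⟨j, hjl, hji, hp⟩ => hnp ⟨⟨j, hjl⟩, hji, hp⟩⟩
    · rintro ⟨hpS, hnp⟩
      exact ⟨hpS, fun ⟨j, hji, hp⟩ => hnp ⟨j, j.2, hji, hp⟩⟩
  have hpnotQ : ∀ i : Fin L.length, ∀ p ∈ N.preT L[i], p ∉ N.maxTrap S := by
    intro i p hp hpQ
    exact (Set.eq_empty_iff_forall_notMem.1 (hpq _ (L.getElem_mem i.2)) p) ⟨hp, hpQ⟩
  have hmemRi : ∀ i : Fin L.length, ∃ p, p ∈ N.preT L[i] ∧ p ∈ R i := by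
    intro i
    obtain ⟨p, hp1, hp2⟩ := hne i i.2
    exact ⟨p, hp1, (hR i).symm ▸ hp2⟩
  refine ⟨L.length, fun i => L[i], R, hlen,
    fun i => hmem _ (L.getElem_mem i.2), fun i => rfl, ?_, ?_, ?_, ?_, ?_,
    fun i => hpq _ (L.getElem_mem i.2), ?_⟩
  · -- strict chain
    intro i j hij
    constructor
    · rintro p ⟨hpS, hnp⟩
      exact ⟨hpS, fun ⟨j', hj', hp⟩ => hnp ⟨j', lt_trans hj' hij, hp⟩⟩
    · intro hsub
      obtain ⟨p, hp1, hp2⟩ := hmemRi i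
      exact (hsub hp2).2 ⟨i, hij, hp1⟩
  · -- R 0 = S
    intro h0
    ext p
    simp only [hRdef, Set.mem_diff, Set.mem_setOf_eq]
    constructor
    · exact fun h => h.1
    · intro h
      refine ⟨h, ?_⟩
      rintro ⟨j, hj, -⟩
      exact absurd hj (by simp [Fin.lt_def])
  · -- maxTrap ⊂ R i
    intro i
    constructor
    · intro q hq
      refine ⟨hQ.1 hq, ?_⟩
      rintro ⟨j, -, hqj⟩
      exact hpnotQ j q hqj hq
    · intro hsub
      obtain ⟨p, hp1, hp2⟩ := hmemRi i
      exact hpnotQ i p hp1 (hsub hp2)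
  · -- nonempty
    intro i
    obtain ⟨p, hp1, hp2⟩ := hmemRi i
    exact ⟨p, hp1, hp2⟩
  · -- postT ∩ R i = ∅
    intro i
    rw [hR i]
    exact hpo i i.2
  · -- final
    have heq : {p | ∃ i : Fin L.length, p ∈ N.preT L[i]} = PriorityAux.preSet N L := by
      ext p
      simp only [Set.mem_setOf_eq, PriorityAux.preSet]
      constructor
      · rintro ⟨i, hp⟩
        exact ⟨L[i], L.getElem_mem i.2, hp⟩
      · rintro ⟨t, ht, hp⟩
        obtain ⟨j, hj, hget⟩ := List.getElem_of_mem ht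
        exact ⟨⟨j, hj⟩, hget ▸ hp⟩
    rw [show {p | ∃ i : Fin L.length, p ∈ N.preT L[i]} = PriorityAux.preSet N L from heq]
    exact hfin
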